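/- Let X₁ⁿ be any n-letter input to the multicast discrete memoryless channel with outputs Y(ℓ)₁ⁿ, and let X* be a single-letter input whose distribution is the average of the marginals, p_{X*} = (1/n)·Σ_{i=1}^n p_{X_i}, with corresponding single-letter outputs Y*(ℓ). Then: (i) for every receiver ℓ, E[b_ℓ(Y*(ℓ))] = (1/n)·E[b_ℓ(Y(ℓ)₁ⁿ)], so if X₁ⁿ is B⃗-admissible then X* satisfies the single-letter energy constraints E[b_ℓ(Y*(ℓ))] ≥ B_ℓ; and (ii) min_{ℓ∈Θ} I(X₁ⁿ; Y(ℓ)₁ⁿ) ≤ n·min_{ℓ∈Θ} I(X*; Y*(ℓ)). -/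

import Mathlib

open scoped BigOperators

noncomputable section

/-- A probability vector on a finite alphabet. -/
def IsProbVec {α : Type} [Fintype α] (p : α → ℝ) : Prop :=
  (∀ a, 0 ≤ p a) ∧ (∑ a, p a) = 1

/-- A (row-stochastic) discrete channel. -/
def IsChannel {α β : Type} [Fintype β] (W : α → β → ℝ) : Prop :=
  ∀ x, (∀ y, 0 ≤ W x y) ∧ (∑ y, W x y) = 1

/-- The memoryless `n`-letter extension of a channel. -/
def nCh {α β : Type} (W : α → β → ℝ) (n : ℕ) (x : Fin n → α) (y : Fin n → β) : ℝ :=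
  ∏ i, W (x i) (y i)

/-- Output distribution induced by input distribution `p` through channel `W`. -/
def outDist {α β : Type} [Fintype α] (p : α → ℝ) (W : α → β → ℝ) (y : β) : ℝ :=
  ∑ x, p x * W x y

/-- Expected value `E[b(Y)]` of an energy function `b` at the channel output. -/
def outEnergy {α β : Type} [Fintype α] [Fintype β] (p : α → ℝ) (W : α → β → ℝ)
    (b : β → ℝ) : ℝ :=
  ∑ y, outDist p W y * b y

/-- Additive block extension of an energy function. -/
def blockE {β : Type} (b : β → ℝ) {n : ℕ} (y : Fin n → β) : ℝ := ∑ i, b (y i)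

/-- Mutual information `I(X;Y)` between the input `X ~ p` and the output of channel `W`. -/
def mutInfo {α β : Type} [Fintype α] [Fintype β] (p : α → ℝ) (W : α → β → ℝ) : ℝ :=
  ∑ x, ∑ y, p x * W x y * Real.log (W x y / outDist p W y)

/-- The `n`-th multicast capacity-energy function with energy constraint vector `B`. -/
def CnVec {𝓧 : Type} [Fintype 𝓧] {L : ℕ} {𝓨 : Fin L → Type} [∀ ℓ, Fintype (𝓨 ℓ)]
    (W : ∀ ℓ, 𝓧 → 𝓨 ℓ → ℝ) (b : ∀ ℓ, 𝓨 ℓ → ℝ) (B : Fin L → ℝ) (n : ℕ) : ℝ :=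
  sSup { r | ∃ p : (Fin n → 𝓧) → ℝ, IsProbVec p ∧
      (∀ ℓ, (n : ℝ) * B ℓ ≤ outEnergy p (nCh (W ℓ) n) (blockE (b ℓ))) ∧
      r = ⨅ ℓ, mutInfo p (nCh (W ℓ) n) }

/-- The multicast capacity-energy function `C(B⃗) = sup_n C_n(B⃗)/n`. -/
def CcapVec {𝓧 : Type} [Fintype 𝓧] {L : ℕ} {𝓨 : Fin L → Type} [∀ ℓ, Fintype (𝓨 ℓ)]
    (W : ∀ ℓ, 𝓧 → 𝓨 ℓ → ℝ) (b : ∀ ℓ, 𝓨 ℓ → ℝ) (B : Fin L → ℝ) : ℝ :=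
  ⨆ n : ℕ+, CnVec W b B n / (n : ℝ)

/-- Input distribution on `𝓧ⁿ` induced by a uniformly distributed message through encoder `f`. -/
def inducedDist {𝓧 : Type} [Fintype 𝓧] [DecidableEq 𝓧] {n M : ℕ}
    (f : Fin M → (Fin n → 𝓧)) (x : Fin n → 𝓧) : ℝ :=
  ((Finset.univ.filter (fun w => f w = x)).card : ℝ) / M

/-- Average error probability of the code `(f, g)` over channel `W`. -/
def errProb {𝓧 𝓨 : Type} [Fintype 𝓨] {n M : ℕ}
    (W : 𝓧 → 𝓨 → ℝ) (f : Fin M → (Fin n → 𝓧)) (g : (Fin n → 𝓨) → Fin M) : ℝ :=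
  (M : ℝ)⁻¹ * ∑ w, ∑ y, if g y = w then 0 else nCh W n (f w) y


/-- The `i`-th single-letter marginal of an `n`-letter input distribution. -/
def marg {𝓧 : Type} [Fintype 𝓧] [DecidableEq 𝓧] {n : ℕ}
    (p : (Fin n → 𝓧) → ℝ) (i : Fin n) (x : 𝓧) : ℝ :=
  ∑ xv : Fin n → 𝓧, if xv i = x then p xv else 0

/-- The averaged single-letter input `p_{X*} = (1/n) Σᵢ p_{Xᵢ}`. -/
def avgMarg {𝓧 : Type} [Fintype 𝓧] [DecidableEq 𝓧] {n : ℕ}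
    (p : (Fin n → 𝓧) → ℝ) (x : 𝓧) : ℝ :=
  (n : ℝ)⁻¹ * ∑ i, marg p i x


section Aux
open Finset

/-- Gibbs' inequality building block. -/
lemma aux_gibbs {β : Type} [Fintype β] (a c : β → ℝ) (ha : ∀ y, 0 ≤ a y)
    (hc : ∀ y, 0 ≤ c y) (h0 : ∀ y, c y = 0 → a y = 0)
    (hsum : ∑ y, c y ≤ ∑ y, a y) :
    0 ≤ ∑ y, a y * Real.log (a y / c y) := by
  have key : ∀ y, a y - c y ≤ a y * Real.log (a y / c y) := by
    intro y
    rcases (ha y).lt_or_eq with h | h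
    · rcases (hc y).lt_or_eq with h' | h'
      · have h1 := Real.log_le_sub_one_of_pos (div_pos h' h)
        rw [Real.log_div (ne_of_gt h') (ne_of_gt h)] at h1
        rw [Real.log_div (ne_of_gt h) (ne_of_gt h')]
        have h2 : a y * (c y / a y) = c y := by field_simp
        nlinarith [mul_le_mul_of_nonneg_left h1 (le_of_lt h)]
      · exact absurd (h0 y h'.symm) (by intro hz; rw [hz] at h; exact lt_irrefl 0 h)
    · rw [← h]; simpa using hc y
  calc (0:ℝ) = ∑ y, a y - ∑ y, c y + (∑ y, c y - ∑ y, a y) := by ring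
    _ ≤ ∑ y, a y - ∑ y, c y := by linarith
    _ = ∑ y, (a y - c y) := (Finset.sum_sub_distrib _ _).symm
    _ ≤ _ := Finset.sum_le_sum fun y _ => key y

/-- Marginalizing a product channel against a single-letter function. -/
lemma aux_sum_prod_mul {β : Type} [Fintype β] {n : ℕ} (Wr : Fin n → β → ℝ)
    (h1 : ∀ j, ∑ y, Wr j y = 1) (i : Fin n) (g : β → ℝ) :
    ∑ y : Fin n → β, (∏ j, Wr j (y j)) * g (y i) = ∑ y, Wr i y * g y := by
  have e : ∀ y : Fin n → β, (∏ j, Wr j (y j)) * g (y i)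
      = ∏ j, (Wr j (y j) * if j = i then g (y j) else 1) := by
    intro y
    rw [Finset.prod_mul_distrib]
    congr 1
    simp
  simp_rw [e]
  have hps := (Fintype.prod_sum (f := fun (j : Fin n) (z : β) => Wr j z * if j = i then g z else 1)).symm
  rw [hps]
  rw [Finset.prod_eq_single i]
  · simp
  · intro j _ hj
    simp only [if_neg hj, mul_one]
    exact h1 j
  · simp

lemma aux_marg_sum {𝓧 : Type} [Fintype 𝓧] [DecidableEq 𝓧] {n : ℕ}
    (p : (Fin n → 𝓧) → ℝ) (i : Fin n) (g : 𝓧 → ℝ) :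
    ∑ x, marg p i x * g x = ∑ xv : Fin n → 𝓧, p xv * g (xv i) := by
  simp_rw [marg, Finset.sum_mul, ite_mul, zero_mul]
  rw [Finset.sum_comm]
  simp

lemma aux_nCh_channel {α β : Type} [Fintype β] {W : α → β → ℝ} (hW : IsChannel W)
    (n : ℕ) : IsChannel (nCh W n) := by
  intro x
  refine ⟨fun y => Finset.prod_nonneg fun j _ => (hW (x j)).1 (y j), ?_⟩
  show ∑ y : Fin n → β, ∏ j, W (x j) (y j) = 1
  rw [(Fintype.prod_sum (f := fun (j : Fin n) (z : β) => W (x j) z)).symm]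
  exact Finset.prod_eq_one fun j _ => (hW (x j)).2

lemma aux_outDist_nonneg {α β : Type} [Fintype α] {p : α → ℝ} {W : α → β → ℝ}
    (hp : ∀ a, 0 ≤ p a) (hW : ∀ x y, 0 ≤ W x y) (y : β) : 0 ≤ outDist p W y :=
  Finset.sum_nonneg fun x _ => mul_nonneg (hp x) (hW x y)

lemma aux_outDist_sum {α β : Type} [Fintype α] [Fintype β] {p : α → ℝ}
    {W : α → β → ℝ} (hp : IsProbVec p) (hW : IsChannel W) :
    ∑ y, outDist p W y = 1 := by
  unfold outDist
  rw [Finset.sum_comm]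
  calc ∑ x, ∑ y, p x * W x y = ∑ x, p x := by
        refine Finset.sum_congr rfl fun x _ => ?_
        rw [← Finset.mul_sum, (hW x).2, mul_one]
    _ = 1 := hp.2

lemma aux_marg_probVec {𝓧 : Type} [Fintype 𝓧] [DecidableEq 𝓧] {n : ℕ}
    {p : (Fin n → 𝓧) → ℝ} (hp : IsProbVec p) (i : Fin n) : IsProbVec (marg p i) := by
  constructor
  · intro x
    refine Finset.sum_nonneg fun xv _ => ?_
    by_cases hvx : xv i = x <;> simp [hvx, hp.1 xv]
  · unfold marg
    rw [Finset.sum_comm]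
    simpa using hp.2

lemma aux_le_marg {𝓧 : Type} [Fintype 𝓧] [DecidableEq 𝓧] {n : ℕ}
    {p : (Fin n → 𝓧) → ℝ} (hp0 : ∀ v, 0 ≤ p v) (i : Fin n) (xv : Fin n → 𝓧) :
    p xv ≤ marg p i (xv i) := by
  have := Finset.single_le_sum (f := fun v : Fin n → 𝓧 => if v i = xv i then p v else 0)
    (fun v _ => by by_cases hvx : v i = xv i <;> simp [hvx, hp0 v]) (Finset.mem_univ xv)
  simpa [marg] using this

end Aux

section Aux2
open Finset

lemma aux_avgMarg_probVec {𝓧 : Type} [Fintype 𝓧] [DecidableEq 𝓧] {n : ℕ} (hn : 0 < n)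
    {p : (Fin n → 𝓧) → ℝ} (hp : IsProbVec p) : IsProbVec (avgMarg p) := by
  constructor
  · intro x
    exact mul_nonneg (inv_nonneg.2 (Nat.cast_nonneg n))
      (Finset.sum_nonneg fun i _ => (aux_marg_probVec hp i).1 x)
  · unfold avgMarg
    rw [← Finset.mul_sum, Finset.sum_comm]
    have : ∀ i : Fin n, ∑ x, marg p i x = 1 := fun i => (aux_marg_probVec hp i).2
    simp only [this, Finset.sum_const, Finset.card_univ, Fintype.card_fin, nsmul_eq_mul, mul_one]
    field_simp

lemma aux_outDist_avg {𝓧 β : Type} [Fintype 𝓧] [DecidableEq 𝓧] {n : ℕ}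
    (p : (Fin n → 𝓧) → ℝ) (W : 𝓧 → β → ℝ) (y : β) :
    outDist (avgMarg p) W y = (n : ℝ)⁻¹ * ∑ i, outDist (marg p i) W y := by
  unfold outDist avgMarg
  simp_rw [mul_assoc, ← Finset.mul_sum, Finset.sum_mul]
  rw [Finset.sum_comm]

lemma aux_energy {𝓧 β : Type} [Fintype 𝓧] [DecidableEq 𝓧] [Fintype β] {n : ℕ}
    {W : 𝓧 → β → ℝ} (hW : IsChannel W) (bb : β → ℝ) (p : (Fin n → 𝓧) → ℝ) :
    outEnergy (avgMarg p) W bb = (n : ℝ)⁻¹ * outEnergy p (nCh W n) (blockE bb) := by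
  have key : ∀ i : Fin n, ∑ y, outDist (marg p i) W y * bb y
      = ∑ x, marg p i x * (∑ y, W x y * bb y) := by
    intro i
    simp_rw [outDist, Finset.sum_mul, Finset.mul_sum]
    rw [Finset.sum_comm]
    simp_rw [mul_assoc]
  have lhs : outEnergy (avgMarg p) W bb
      = (n : ℝ)⁻¹ * ∑ i, ∑ x, marg p i x * (∑ y, W x y * bb y) := by
    unfold outEnergy
    simp_rw [aux_outDist_avg p W, mul_assoc, ← Finset.mul_sum, Finset.sum_mul]
    rw [Finset.sum_comm]
    simp_rw [key]
  have hx : ∀ xv : Fin n → 𝓧, ∑ yv : Fin n → β, nCh W n xv yv * blockE bb yv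
      = ∑ i, ∑ z, W (xv i) z * bb z := by
    intro xv
    simp_rw [blockE, Finset.mul_sum]
    rw [Finset.sum_comm]
    exact Finset.sum_congr rfl fun i _ =>
      aux_sum_prod_mul (fun j => W (xv j)) (fun j => (hW (xv j)).2) i bb
  have rhs : outEnergy p (nCh W n) (blockE bb)
      = ∑ i, ∑ x, marg p i x * (∑ z, W x z * bb z) := by
    unfold outEnergy outDist
    simp_rw [Finset.sum_mul]
    rw [Finset.sum_comm]
    calc ∑ xv, ∑ yv, p xv * nCh W n xv yv * blockE bb yv
        = ∑ xv, p xv * ∑ i, ∑ z, W (xv i) z * bb z := by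
          refine Finset.sum_congr rfl fun xv _ => ?_
          rw [← hx xv, Finset.mul_sum]
          simp_rw [mul_assoc]
      _ = ∑ i, ∑ xv, p xv * (∑ z, W (xv i) z * bb z) := by
          simp_rw [Finset.mul_sum]
          rw [Finset.sum_comm]
      _ = ∑ i, ∑ x, marg p i x * (∑ z, W x z * bb z) :=
          Finset.sum_congr rfl fun i _ => (aux_marg_sum p i (fun x => ∑ z, W x z * bb z)).symm
  rw [lhs, rhs]

end Aux2

section Aux3
open Finset

lemma aux_subadd {𝓧 β : Type} [Fintype 𝓧] [DecidableEq 𝓧] [Fintype β] {n : ℕ}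
    {W : 𝓧 → β → ℝ} (hW : IsChannel W) {p : (Fin n → 𝓧) → ℝ} (hp : IsProbVec p) :
    mutInfo p (nCh W n) ≤ ∑ i, mutInfo (marg p i) W := by
  have hpnn := hp.1
  have hnChnn : ∀ (xv : Fin n → 𝓧) (yv : Fin n → β), 0 ≤ nCh W n xv yv :=
    fun xv yv => ((aux_nCh_channel hW n) xv).1 yv
  -- Step 1 : rewrite the sum of single-letter mutual informations
  have step1 : ∑ i, mutInfo (marg p i) W
      = ∑ xv, ∑ yv, p xv * nCh W n xv yv *
          ∑ i, Real.log (W (xv i) (yv i) / outDist (marg p i) W (yv i)) := by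
    have e1 : ∀ i : Fin n, mutInfo (marg p i) W
        = ∑ xv, p xv * ∑ y, W (xv i) y * Real.log (W (xv i) y / outDist (marg p i) W y) := by
      intro i
      unfold mutInfo
      rw [← aux_marg_sum p i
        (fun x => ∑ y, W x y * Real.log (W x y / outDist (marg p i) W y))]
      refine Finset.sum_congr rfl fun x _ => ?_
      rw [Finset.mul_sum]
      simp_rw [mul_assoc]
    have e2 : ∀ (i : Fin n) (xv : Fin n → 𝓧),
        ∑ y, W (xv i) y * Real.log (W (xv i) y / outDist (marg p i) W y)
        = ∑ yv : Fin n → β, nCh W n xv yv *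
            Real.log (W (xv i) (yv i) / outDist (marg p i) W (yv i)) :=
      fun i xv => (aux_sum_prod_mul (fun j => W (xv j)) (fun j => (hW (xv j)).2) i
        (fun y => Real.log (W (xv i) y / outDist (marg p i) W y))).symm
    calc ∑ i, mutInfo (marg p i) W
        = ∑ i, ∑ xv, ∑ yv, p xv * nCh W n xv yv *
            Real.log (W (xv i) (yv i) / outDist (marg p i) W (yv i)) := by
          refine Finset.sum_congr rfl fun i _ => ?_
          rw [e1 i]
          refine Finset.sum_congr rfl fun xv _ => ?_
          rw [e2 i xv, Finset.mul_sum]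
          simp_rw [← mul_assoc]
      _ = _ := by
          rw [Finset.sum_comm]
          refine Finset.sum_congr rfl fun xv _ => ?_
          rw [Finset.sum_comm]
          refine Finset.sum_congr rfl fun yv _ => ?_
          rw [← Finset.mul_sum]
  -- Pointwise identity
  have point : ∀ (xv : Fin n → 𝓧) (yv : Fin n → β),
      p xv * nCh W n xv yv *
          (∑ i, Real.log (W (xv i) (yv i) / outDist (marg p i) W (yv i)))
        - p xv * nCh W n xv yv * Real.log (nCh W n xv yv / outDist p (nCh W n) yv)
      = p xv * nCh W n xv yv *
          Real.log (outDist p (nCh W n) yv / ∏ i, outDist (marg p i) W (yv i)) := by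
    intro xv yv
    rcases (mul_nonneg (hpnn xv) (hnChnn xv yv)).lt_or_eq with h | h
    · have hpx : 0 < p xv := by
        rcases (hpnn xv).lt_or_eq with h' | h'
        · exact h'
        · rw [← h', zero_mul] at h; exact absurd h (lt_irrefl 0)
      have hch : 0 < nCh W n xv yv := by
        rcases (hnChnn xv yv).lt_or_eq with h' | h'
        · exact h'
        · rw [← h', mul_zero] at h; exact absurd h (lt_irrefl 0)
      have hWpos : ∀ i, 0 < W (xv i) (yv i) := by
        intro i
        have hne : (∏ j, W (xv j) (yv j)) ≠ 0 := ne_of_gt hch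
        have := Finset.prod_ne_zero_iff.1 hne i (Finset.mem_univ i)
        exact lt_of_le_of_ne ((hW (xv i)).1 (yv i)) (Ne.symm this)
      have hqpos : ∀ i, 0 < outDist (marg p i) W (yv i) := by
        intro i
        have h1 : marg p i (xv i) * W (xv i) (yv i) ≤ outDist (marg p i) W (yv i) :=
          Finset.single_le_sum (f := fun x => marg p i x * W x (yv i))
            (fun x _ => mul_nonneg ((aux_marg_probVec hp i).1 x) ((hW x).1 (yv i)))
            (Finset.mem_univ (xv i))
        have h2 : 0 < marg p i (xv i) := lt_of_lt_of_le hpx (aux_le_marg hpnn i xv)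
        exact lt_of_lt_of_le (mul_pos h2 (hWpos i)) h1
      have hQpos : 0 < outDist p (nCh W n) yv := by
        have h1 : p xv * nCh W n xv yv ≤ outDist p (nCh W n) yv :=
          Finset.single_le_sum (f := fun x => p x * nCh W n x yv)
            (fun x _ => mul_nonneg (hpnn x) (hnChnn x yv)) (Finset.mem_univ xv)
        exact lt_of_lt_of_le h h1
      have hRpos : 0 < ∏ i, outDist (marg p i) W (yv i) :=
        Finset.prod_pos fun i _ => hqpos i
      have e1 : ∑ i, Real.log (W (xv i) (yv i) / outDist (marg p i) W (yv i))
          = Real.log (nCh W n xv yv) - Real.log (∏ i, outDist (marg p i) W (yv i)) := by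
        calc ∑ i, Real.log (W (xv i) (yv i) / outDist (marg p i) W (yv i))
            = ∑ i, (Real.log (W (xv i) (yv i)) - Real.log (outDist (marg p i) W (yv i))) :=
              Finset.sum_congr rfl fun i _ =>
                Real.log_div (ne_of_gt (hWpos i)) (ne_of_gt (hqpos i))
          _ = _ := by
              rw [Finset.sum_sub_distrib,
                ← Real.log_prod (s := Finset.univ) (f := fun i => W (xv i) (yv i)) (fun i _ => ne_of_gt (hWpos i)),
                ← Real.log_prod (s := Finset.univ) (f := fun i => outDist (marg p i) W (yv i)) (fun i _ => ne_of_gt (hqpos i))]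
              rfl
      rw [e1, Real.log_div (ne_of_gt hch) (ne_of_gt hQpos),
        Real.log_div (ne_of_gt hQpos) (ne_of_gt hRpos)]
      ring
    · rw [← h]; ring
  -- Collapse the x-sum
  have swap : ∑ xv, ∑ yv, p xv * nCh W n xv yv *
        Real.log (outDist p (nCh W n) yv / ∏ i, outDist (marg p i) W (yv i))
      = ∑ yv, outDist p (nCh W n) yv *
        Real.log (outDist p (nCh W n) yv / ∏ i, outDist (marg p i) W (yv i)) := by
    rw [Finset.sum_comm]
    refine Finset.sum_congr rfl fun yv _ => ?_
    rw [← Finset.sum_mul]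
    rfl
  -- Gibbs' inequality hypotheses
  have hR0 : ∀ yv : Fin n → β, (∏ i, outDist (marg p i) W (yv i)) = 0 →
      outDist p (nCh W n) yv = 0 := by
    intro yv hR
    obtain ⟨i, -, hi⟩ := Finset.prod_eq_zero_iff.1 hR
    refine Finset.sum_eq_zero fun xv _ => ?_
    have hterm : marg p i (xv i) * W (xv i) (yv i) = 0 := by
      have hnn : ∀ x ∈ Finset.univ, (0:ℝ) ≤ marg p i x * W x (yv i) :=
        fun x _ => mul_nonneg ((aux_marg_probVec hp i).1 x) ((hW x).1 (yv i))
      exact (Finset.sum_eq_zero_iff_of_nonneg hnn).1 hi (xv i) (Finset.mem_univ _)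
    rcases mul_eq_zero.1 hterm with h | h
    · have h1 := aux_le_marg hp.1 i xv
      have h2 : p xv = 0 := le_antisymm (h ▸ h1) (hp.1 xv)
      rw [h2, zero_mul]
    · have h2 : nCh W n xv yv = 0 := Finset.prod_eq_zero (Finset.mem_univ i) h
      rw [h2, mul_zero]
  have hRsum : ∑ yv : Fin n → β, ∏ i, outDist (marg p i) W (yv i) = 1 := by
    rw [(Fintype.prod_sum (f := fun (i : Fin n) (z : β) => outDist (marg p i) W z)).symm]
    exact Finset.prod_eq_one fun i _ => aux_outDist_sum (aux_marg_probVec hp i) hW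
  have hQsum : ∑ yv, outDist p (nCh W n) yv = 1 := aux_outDist_sum hp (aux_nCh_channel hW n)
  have gibbs := aux_gibbs (outDist p (nCh W n))
    (fun yv => ∏ i, outDist (marg p i) W (yv i))
    (fun yv => aux_outDist_nonneg hp.1 (fun x y => ((aux_nCh_channel hW n) x).1 y) yv)
    (fun yv => Finset.prod_nonneg fun i _ =>
      aux_outDist_nonneg ((aux_marg_probVec hp i).1) (fun x y => (hW x).1 y) _)
    hR0 (by rw [hRsum, hQsum])
  have hMI : mutInfo p (nCh W n) = ∑ xv, ∑ yv, p xv * nCh W n xv yv *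
      Real.log (nCh W n xv yv / outDist p (nCh W n) yv) := rfl
  have final : ∑ i, mutInfo (marg p i) W - mutInfo p (nCh W n)
      = ∑ yv, outDist p (nCh W n) yv *
        Real.log (outDist p (nCh W n) yv / ∏ i, outDist (marg p i) W (yv i)) := by
    rw [step1, hMI, ← Finset.sum_sub_distrib]
    simp_rw [← Finset.sum_sub_distrib]
    rw [← swap]
    exact Finset.sum_congr rfl fun xv _ => Finset.sum_congr rfl fun yv _ => point xv yv
  linarith [gibbs, final]

end Aux3

section Aux4
open Finset

lemma aux_concave {𝓧 β : Type} [Fintype 𝓧] [DecidableEq 𝓧] [Fintype β] {n : ℕ}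
    (hn : 0 < n) {W : 𝓧 → β → ℝ} (hW : IsChannel W) {p : (Fin n → 𝓧) → ℝ}
    (hp : IsProbVec p) :
    ∑ i, mutInfo (marg p i) W ≤ (n : ℝ) * mutInfo (avgMarg p) W := by
  have hnR : (0:ℝ) < n := by exact_mod_cast hn
  have expand : (n:ℝ) * mutInfo (avgMarg p) W
      = ∑ i, ∑ x, ∑ y, marg p i x *
          (W x y * Real.log (W x y / outDist (avgMarg p) W y)) := by
    unfold mutInfo avgMarg
    simp_rw [mul_assoc, ← Finset.mul_sum, Finset.sum_mul]
    rw [← mul_assoc, mul_inv_cancel₀ (ne_of_gt hnR), one_mul, Finset.sum_comm]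
  have per : ∀ i : Fin n, mutInfo (marg p i) W
      ≤ ∑ x, ∑ y, marg p i x * (W x y * Real.log (W x y / outDist (avgMarg p) W y)) := by
    intro i
    have point : ∀ x y, marg p i x * (W x y * Real.log (W x y / outDist (avgMarg p) W y))
        - marg p i x * W x y * Real.log (W x y / outDist (marg p i) W y)
        = marg p i x * W x y *
            Real.log (outDist (marg p i) W y / outDist (avgMarg p) W y) := by
      intro x y
      rcases (mul_nonneg ((aux_marg_probVec hp i).1 x) ((hW x).1 y)).lt_or_eq with h | h
      · have hm : 0 < marg p i x := by
          rcases ((aux_marg_probVec hp i).1 x).lt_or_eq with h' | h'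
          · exact h'
          · rw [← h', zero_mul] at h; exact absurd h (lt_irrefl 0)
        have hw : 0 < W x y := by
          rcases ((hW x).1 y).lt_or_eq with h' | h'
          · exact h'
          · rw [← h', mul_zero] at h; exact absurd h (lt_irrefl 0)
        have hqi : 0 < outDist (marg p i) W y := by
          have h1 : marg p i x * W x y ≤ outDist (marg p i) W y :=
            Finset.single_le_sum (f := fun x' => marg p i x' * W x' y)
              (fun x' _ => mul_nonneg ((aux_marg_probVec hp i).1 x') ((hW x').1 y))
              (Finset.mem_univ x)
          exact lt_of_lt_of_le h h1
        have hq : 0 < outDist (avgMarg p) W y := by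
          rw [aux_outDist_avg]
          have h1 : outDist (marg p i) W y ≤ ∑ j, outDist (marg p j) W y :=
            Finset.single_le_sum (f := fun j => outDist (marg p j) W y)
              (fun j _ => aux_outDist_nonneg ((aux_marg_probVec hp j).1)
                (fun x' y' => (hW x').1 y') y) (Finset.mem_univ i)
          exact mul_pos (inv_pos.2 hnR) (lt_of_lt_of_le hqi h1)
        rw [Real.log_div (ne_of_gt hw) (ne_of_gt hq),
          Real.log_div (ne_of_gt hw) (ne_of_gt hqi),
          Real.log_div (ne_of_gt hqi) (ne_of_gt hq)]
        ring
      · rw [show marg p i x * (W x y * Real.log (W x y / outDist (avgMarg p) W y))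
            = marg p i x * W x y * Real.log (W x y / outDist (avgMarg p) W y) from
            (mul_assoc _ _ _).symm, ← h]
        ring
    have collapse : ∑ x, ∑ y, marg p i x * W x y *
          Real.log (outDist (marg p i) W y / outDist (avgMarg p) W y)
        = ∑ y, outDist (marg p i) W y *
          Real.log (outDist (marg p i) W y / outDist (avgMarg p) W y) := by
      rw [Finset.sum_comm]
      refine Finset.sum_congr rfl fun y _ => ?_
      rw [← Finset.sum_mul]
      rfl
    have h0 : ∀ y, outDist (avgMarg p) W y = 0 → outDist (marg p i) W y = 0 := by
      intro y hy
      rw [aux_outDist_avg] at hy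
      have hsz : ∑ j, outDist (marg p j) W y = 0 := by
        rcases mul_eq_zero.1 hy with h | h
        · exact absurd h (ne_of_gt (inv_pos.2 hnR))
        · exact h
      have hnn : ∀ j ∈ Finset.univ, (0:ℝ) ≤ outDist (marg p j) W y :=
        fun j _ => aux_outDist_nonneg ((aux_marg_probVec hp j).1)
          (fun x' y' => (hW x').1 y') y
      exact (Finset.sum_eq_zero_iff_of_nonneg hnn).1 hsz i (Finset.mem_univ i)
    have gibbs := aux_gibbs (outDist (marg p i) W) (outDist (avgMarg p) W)
      (fun y => aux_outDist_nonneg ((aux_marg_probVec hp i).1)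
        (fun x' y' => (hW x').1 y') y)
      (fun y => aux_outDist_nonneg ((aux_avgMarg_probVec hn hp).1)
        (fun x' y' => (hW x').1 y') y)
      h0
      (by rw [aux_outDist_sum (aux_marg_probVec hp i) hW,
        aux_outDist_sum (aux_avgMarg_probVec hn hp) hW])
    have hMI : mutInfo (marg p i) W = ∑ x, ∑ y, marg p i x * W x y *
        Real.log (W x y / outDist (marg p i) W y) := rfl
    have final : (∑ x, ∑ y, marg p i x *
          (W x y * Real.log (W x y / outDist (avgMarg p) W y)))
        - mutInfo (marg p i) W
        = ∑ y, outDist (marg p i) W y *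
          Real.log (outDist (marg p i) W y / outDist (avgMarg p) W y) := by
      rw [hMI, ← Finset.sum_sub_distrib]
      simp_rw [← Finset.sum_sub_distrib]
      rw [← collapse]
      exact Finset.sum_congr rfl fun x _ => Finset.sum_congr rfl fun y _ => point x y
    linarith [gibbs, final]
  calc ∑ i, mutInfo (marg p i) W
      ≤ ∑ i, ∑ x, ∑ y, marg p i x *
          (W x y * Real.log (W x y / outDist (avgMarg p) W y)) :=
        Finset.sum_le_sum fun i _ => per i
    _ = _ := expand.symm

end Aux4

/-- **The averaged single-letter input inherits the energy constraints and dominates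
the normalized multi-letter mutual information.** For any `n`-letter input `X₁ⁿ` with
`X* ~ (1/n) Σᵢ p_{Xᵢ}`:
(i) `E[b_ℓ(Y*(ℓ))] = (1/n)·E[b_ℓ(Y(ℓ)₁ⁿ)]` for every `ℓ`, so `B⃗`-admissibility of `X₁ⁿ`
gives `E[b_ℓ(Y*(ℓ))] ≥ B_ℓ`; and
(ii) `min_ℓ I(X₁ⁿ; Y(ℓ)₁ⁿ) ≤ n · min_ℓ I(X*; Y*(ℓ))`. -/
theorem avgMarg_energy_and_mutInfo
    {𝓧 : Type} [Fintype 𝓧] [DecidableEq 𝓧] {L : ℕ} (hL : 0 < L)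
    {𝓨 : Fin L → Type} [∀ ℓ, Fintype (𝓨 ℓ)]
    (W : ∀ ℓ, 𝓧 → 𝓨 ℓ → ℝ) (hW : ∀ ℓ, IsChannel (W ℓ))
    (b : ∀ ℓ, 𝓨 ℓ → ℝ) (hb : ∀ ℓ y, 0 ≤ b ℓ y)
    (n : ℕ) (hn : 0 < n) (B : Fin L → ℝ)
    (p : (Fin n → 𝓧) → ℝ) (hp : IsProbVec p) :
    (∀ ℓ, outEnergy (avgMarg p) (W ℓ) (b ℓ)
        = (n : ℝ)⁻¹ * outEnergy p (nCh (W ℓ) n) (blockE (b ℓ))) ∧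
    ((∀ ℓ, (n : ℝ) * B ℓ ≤ outEnergy p (nCh (W ℓ) n) (blockE (b ℓ))) →
      ∀ ℓ, B ℓ ≤ outEnergy (avgMarg p) (W ℓ) (b ℓ)) ∧
    (⨅ ℓ, mutInfo p (nCh (W ℓ) n)) ≤ n * ⨅ ℓ, mutInfo (avgMarg p) (W ℓ) := by
  have hnR : (0:ℝ) < n := by exact_mod_cast hn
  refine ⟨fun ℓ => aux_energy (hW ℓ) (b ℓ) p, ?_, ?_⟩
  · intro h ℓ
    rw [aux_energy (hW ℓ) (b ℓ) p]
    calc B ℓ = (n:ℝ)⁻¹ * ((n:ℝ) * B ℓ) := by field_simp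
      _ ≤ (n:ℝ)⁻¹ * outEnergy p (nCh (W ℓ) n) (blockE (b ℓ)) :=
        mul_le_mul_of_nonneg_left (h ℓ) (inv_nonneg.2 (le_of_lt hnR))
  · have key : ∀ ℓ, mutInfo p (nCh (W ℓ) n) ≤ (n:ℝ) * mutInfo (avgMarg p) (W ℓ) :=
      fun ℓ => (aux_subadd (hW ℓ) hp).trans (aux_concave hn (hW ℓ) hp)
    haveI : Nonempty (Fin L) := ⟨⟨0, hL⟩⟩
    obtain ⟨ℓ₀, -, hℓ₀⟩ := Finset.exists_min_image Finset.univ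
      (fun ℓ => mutInfo (avgMarg p) (W ℓ)) ⟨⟨0, hL⟩, Finset.mem_univ _⟩
    have hinf : (⨅ ℓ, mutInfo (avgMarg p) (W ℓ)) = mutInfo (avgMarg p) (W ℓ₀) := by
      apply le_antisymm
      · exact ciInf_le (Set.Finite.bddBelow (Set.finite_range _)) ℓ₀
      · exact le_ciInf fun ℓ => hℓ₀ ℓ (Finset.mem_univ ℓ)
    rw [hinf]
    calc (⨅ ℓ, mutInfo p (nCh (W ℓ) n)) ≤ mutInfo p (nCh (W ℓ₀) n) :=
          ciInf_le (Set.Finite.bddBelow (Set.finite_range _)) ℓ₀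
      _ ≤ _ := key ℓ₀

end
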